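/- Let U_BB(r,θ,ν,γ) be a BB matrix on ℓ²(ℤ) and let V(γ) be the diagonal unitary V(γ)|k⟩ = e^{iζ_k}|k⟩ with ζ₀=0, ζ_k = −Σ_{j=0}^{k−1} γ_j for k ≥ 1, and ζ_{−k} = Σ_{j=−1}^{−k} γ_j for k ≥ 1. Then V(γ)^{−1} U_BB(r,θ,ν,γ) V(γ) = U_BB(r,θ,ν,0); in particular the phases γ can be gauged away without changing the spectrum. -/

import Mathlib

open Complex

noncomputable section

/-- `ℓ²(ℤ)`. -/
abbrev HZ := lp (fun _ : ℤ => ℂ) 2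

/-- The canonical basis vector `|k⟩`. -/
def δZ (k : ℤ) : HZ := lp.single 2 k 1

/-- The scattering matrix
`S_k = e^{-iθ_k} [[r_k e^{-iν_k}, i t_k e^{iγ_k}], [i t_k e^{-iγ_k}, r_k e^{iν_k}]]`. -/
def Smat (r t θ ν γ : ℤ → ℝ) (k : ℤ) : Matrix (Fin 2) (Fin 2) ℂ :=
  Complex.exp (-Complex.I * θ k) •
    !![(r k : ℂ) * Complex.exp (-Complex.I * ν k),
       Complex.I * t k * Complex.exp (Complex.I * γ k);
       Complex.I * t k * Complex.exp (-Complex.I * γ k),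
       (r k : ℂ) * Complex.exp (Complex.I * ν k)]

/-- `De = Σ_k P_{[2k,2k+1]} S_{2k} P_{[2k,2k+1]}`, characterized by its action on the
canonical basis. -/
def IsDe (r t θ ν γ : ℤ → ℝ) (De : HZ →L[ℂ] HZ) : Prop :=
  ∀ k : ℤ,
    De (δZ (2 * k)) =
      Smat r t θ ν γ (2 * k) 0 0 • δZ (2 * k) + Smat r t θ ν γ (2 * k) 1 0 • δZ (2 * k + 1) ∧
    De (δZ (2 * k + 1)) =
      Smat r t θ ν γ (2 * k) 0 1 • δZ (2 * k) + Smat r t θ ν γ (2 * k) 1 1 • δZ (2 * k + 1)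

/-- `Do = Σ_k P_{[2k+1,2k+2]} S_{2k+1} P_{[2k+1,2k+2]}`, characterized by its action on
the canonical basis. -/
def IsDo (r t θ ν γ : ℤ → ℝ) (Do : HZ →L[ℂ] HZ) : Prop :=
  ∀ k : ℤ,
    Do (δZ (2 * k + 1)) =
      Smat r t θ ν γ (2 * k + 1) 0 0 • δZ (2 * k + 1) +
        Smat r t θ ν γ (2 * k + 1) 1 0 • δZ (2 * k + 2) ∧
    Do (δZ (2 * k + 2)) =
      Smat r t θ ν γ (2 * k + 1) 0 1 • δZ (2 * k + 1) +
        Smat r t θ ν γ (2 * k + 1) 1 1 • δZ (2 * k + 2)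

/-- The gauge phases `ζ_0 = 0`, `ζ_k = -Σ_{j=0}^{k-1} γ_j` (k ≥ 1),
`ζ_{-k} = Σ_{j=-1}^{-k} γ_j` (k ≥ 1). -/
def zeta (γ : ℤ → ℝ) (k : ℤ) : ℝ :=
  if 0 ≤ k then -(∑ j ∈ Finset.range k.toNat, γ j)
  else ∑ j ∈ Finset.range (-k).toNat, γ (-(j + 1 : ℤ))

lemma zeta_succ (γ : ℤ → ℝ) (k : ℤ) : zeta γ (k + 1) = zeta γ k - γ k := by
  unfold zeta
  rcases lt_trichotomy k (-1) with h | h | h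
  · rw [if_neg (by omega), if_neg (by omega)]
    have h1 : (-k).toNat = (-(k+1)).toNat + 1 := by omega
    rw [h1, Finset.sum_range_succ]
    have h2 : (-(((-(k+1)).toNat : ℤ) + 1)) = k := by omega
    rw [h2]; ring
  · subst h; norm_num
  · rw [if_pos (by omega), if_pos (by omega)]
    have h1 : (k+1).toNat = k.toNat + 1 := by omega
    rw [h1, Finset.sum_range_succ]
    have h2 : ((k.toNat : ℤ)) = k := by omega
    rw [h2]; ring

lemma Smat_apply (r t θ ν γ : ℤ → ℝ) (k : ℤ) :
    Smat r t θ ν γ k 0 0 = Complex.exp (-Complex.I * θ k) * ((r k : ℂ) * Complex.exp (-Complex.I * ν k)) ∧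
    Smat r t θ ν γ k 0 1 = Complex.exp (-Complex.I * θ k) * (Complex.I * t k * Complex.exp (Complex.I * γ k)) ∧
    Smat r t θ ν γ k 1 0 = Complex.exp (-Complex.I * θ k) * (Complex.I * t k * Complex.exp (-Complex.I * γ k)) ∧
    Smat r t θ ν γ k 1 1 = Complex.exp (-Complex.I * θ k) * ((r k : ℂ) * Complex.exp (Complex.I * ν k)) := by
  refine ⟨?_, ?_, ?_, ?_⟩ <;> simp [Smat]

lemma clm_ext_basis (L R : HZ →L[ℂ] HZ) (h : ∀ k, L (δZ k) = R (δZ k)) : L = R := by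
  refine ContinuousLinearMap.ext fun x => ?_
  have hs := lp.hasSum_single ENNReal.ofNat_ne_top x
  have key : ∀ i : ℤ, lp.single (E := fun _ : ℤ => ℂ) 2 i (x i) = x i • δZ i := by
    intro i
    rw [δZ, ← lp.single_smul, smul_eq_mul, mul_one]
  have h1 : HasSum (fun i => L (lp.single 2 i (x i))) (L x) := hs.mapL L
  have h2 : HasSum (fun i => L (lp.single 2 i (x i))) (R x) := by
    have h3 := hs.mapL R
    refine HasSum.congr_fun h3 fun i => ?_
    rw [key i, map_smul, map_smul, h i]
  exact h1.unique h2

set_option maxHeartbeats 2000000 in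
theorem conj_basis (r t θ ν γ : ℤ → ℝ)
    (De Do De0 Do0 Vg Vginv : HZ →L[ℂ] HZ)
    (hDe : ∀ k : ℤ,
      De (δZ (2 * k)) =
        Smat r t θ ν γ (2 * k) 0 0 • δZ (2 * k) + Smat r t θ ν γ (2 * k) 1 0 • δZ (2 * k + 1) ∧
      De (δZ (2 * k + 1)) =
        Smat r t θ ν γ (2 * k) 0 1 • δZ (2 * k) + Smat r t θ ν γ (2 * k) 1 1 • δZ (2 * k + 1))
    (hDo : ∀ k : ℤ,
      Do (δZ (2 * k + 1)) =
        Smat r t θ ν γ (2 * k + 1) 0 0 • δZ (2 * k + 1) +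
          Smat r t θ ν γ (2 * k + 1) 1 0 • δZ (2 * k + 2) ∧
      Do (δZ (2 * k + 2)) =
        Smat r t θ ν γ (2 * k + 1) 0 1 • δZ (2 * k + 1) +
          Smat r t θ ν γ (2 * k + 1) 1 1 • δZ (2 * k + 2))
    (hDe0 : ∀ k : ℤ,
      De0 (δZ (2 * k)) =
        Smat r t θ ν (fun _ => 0) (2 * k) 0 0 • δZ (2 * k) + Smat r t θ ν (fun _ => 0) (2 * k) 1 0 • δZ (2 * k + 1) ∧
      De0 (δZ (2 * k + 1)) =
        Smat r t θ ν (fun _ => 0) (2 * k) 0 1 • δZ (2 * k) + Smat r t θ ν (fun _ => 0) (2 * k) 1 1 • δZ (2 * k + 1))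
    (hDo0 : ∀ k : ℤ,
      Do0 (δZ (2 * k + 1)) =
        Smat r t θ ν (fun _ => 0) (2 * k + 1) 0 0 • δZ (2 * k + 1) +
          Smat r t θ ν (fun _ => 0) (2 * k + 1) 1 0 • δZ (2 * k + 2) ∧
      Do0 (δZ (2 * k + 2)) =
        Smat r t θ ν (fun _ => 0) (2 * k + 1) 0 1 • δZ (2 * k + 1) +
          Smat r t θ ν (fun _ => 0) (2 * k + 1) 1 1 • δZ (2 * k + 2))
    (hV : ∀ k, Vg (δZ k) = Complex.exp (Complex.I * zeta γ k) • δZ k)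
    (hVinv : ∀ k, Vginv (δZ k) = Complex.exp (-Complex.I * zeta γ k) • δZ k)
    (n : ℤ) :
    Vginv (Do (De (Vg (δZ n)))) = Do0 (De0 (δZ n)) := by
  obtain ⟨k, hk | hk⟩ := Int.even_or_odd' n
  all_goals {
    subst hk
    have eDoA := (hDo (k-1)).2
    have eDoA0 := (hDo0 (k-1)).2
    simp only [show (2*(k-1)+2:ℤ) = 2*k from by ring, show (2*(k-1)+1:ℤ) = 2*k-1 from by ring]
      at eDoA eDoA0
    have e1 : zeta γ (2*k-1) = zeta γ (2*k) + γ (2*k-1) := by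
      have := zeta_succ γ (2*k-1)
      simp only [show (2*k-1+1:ℤ) = 2*k from by ring] at this
      linarith
    have e2 : zeta γ (2*k+1) = zeta γ (2*k) - γ (2*k) := zeta_succ γ (2*k)
    have e3 : zeta γ (2*k+2) = zeta γ (2*k) - γ (2*k) - γ (2*k+1) := by
      have := zeta_succ γ (2*k+1)
      simp only [show (2*k+1+1:ℤ) = 2*k+2 from by ring] at this
      linarith
    simp only [hV, map_smul, map_add, (hDe k).1, (hDe k).2, eDoA, (hDo k).1,
      (hDe0 k).1, (hDe0 k).2, eDoA0, (hDo0 k).1, hVinv, smul_add, smul_smul]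
    obtain ⟨s00, s01, s10, s11⟩ := Smat_apply r t θ ν γ (2*k)
    obtain ⟨o00, o01, o10, o11⟩ := Smat_apply r t θ ν γ (2*k-1)
    obtain ⟨p00, p01, p10, p11⟩ := Smat_apply r t θ ν γ (2*k+1)
    obtain ⟨s00', s01', s10', s11'⟩ := Smat_apply r t θ ν (fun _ => 0) (2*k)
    obtain ⟨o00', o01', o10', o11'⟩ := Smat_apply r t θ ν (fun _ => 0) (2*k-1)
    obtain ⟨p00', p01', p10', p11'⟩ := Smat_apply r t θ ν (fun _ => 0) (2*k+1)
    simp only [s00, s01, s10, s11, o01, o11, p00, p10, s00', s01', s10', s11', o01', o11', p00', p10']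
    simp only [Complex.ofReal_zero, mul_zero, neg_mul, neg_zero, Complex.exp_zero, mul_one]
    rw [e1, e2, e3]
    match_scalars <;>
    · push_cast
      simp only [mul_add, mul_sub, mul_neg, neg_mul, neg_neg, neg_add, neg_sub,
        Complex.exp_add, Complex.exp_sub, Complex.exp_neg]
      field_simp
  }


/-- Gauging away the phases `γ` of a BB matrix:
`V(γ)⁻¹ U_BB(r,θ,ν,γ) V(γ) = U_BB(r,θ,ν,0)`; in particular the spectrum is unchanged. -/
theorem bb_gauge_away (r t θ ν γ : ℤ → ℝ)
    (hr : ∀ k, r k ∈ Set.Icc (0:ℝ) 1) (ht : ∀ k, t k ∈ Set.Icc (0:ℝ) 1)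
    (hrt : ∀ k, r k ^ 2 + t k ^ 2 = 1)
    (De Do De0 Do0 Vg Vginv : HZ →L[ℂ] HZ)
    (hDe : IsDe r t θ ν γ De) (hDo : IsDo r t θ ν γ Do)
    (hDe0 : IsDe r t θ ν (fun _ => 0) De0) (hDo0 : IsDo r t θ ν (fun _ => 0) Do0)
    (hV : ∀ k, Vg (δZ k) = Complex.exp (Complex.I * zeta γ k) • δZ k)
    (hVinv : ∀ k, Vginv (δZ k) = Complex.exp (-Complex.I * zeta γ k) • δZ k) :
    (∀ x : HZ, Vginv (Do (De (Vg x))) = Do0 (De0 x)) ∧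
    spectrum ℂ (Do.comp De) = spectrum ℂ (Do0.comp De0) := by
  have hbasis : ∀ n : ℤ, Vginv (Do (De (Vg (δZ n)))) = Do0 (De0 (δZ n)) :=
    conj_basis r t θ ν γ De Do De0 Do0 Vg Vginv hDe hDo hDe0 hDo0 hV hVinv
  have hc : Vginv.comp (Do.comp (De.comp Vg)) = Do0.comp De0 := by
    refine clm_ext_basis _ _ fun n => ?_
    simpa only [ContinuousLinearMap.comp_apply] using hbasis n
  have hx : ∀ x : HZ, Vginv (Do (De (Vg x))) = Do0 (De0 x) := by
    intro x
    have := ContinuousLinearMap.ext_iff.mp hc x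
    simpa only [ContinuousLinearMap.comp_apply] using this
  refine ⟨hx, ?_⟩
  have hVV : Vg.comp Vginv = 1 := by
    refine clm_ext_basis _ _ fun n => ?_
    rw [ContinuousLinearMap.comp_apply, hVinv, map_smul, hV, smul_smul,
      ContinuousLinearMap.one_apply, ← Complex.exp_add,
      show -Complex.I * (zeta γ n : ℂ) + Complex.I * (zeta γ n : ℂ) = 0 from by ring,
      Complex.exp_zero, one_smul]
  have hVV' : Vginv.comp Vg = 1 := by
    refine clm_ext_basis _ _ fun n => ?_
    rw [ContinuousLinearMap.comp_apply, hV, map_smul, hVinv, smul_smul,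
      ContinuousLinearMap.one_apply, ← Complex.exp_add,
      show Complex.I * (zeta γ n : ℂ) + -Complex.I * (zeta γ n : ℂ) = 0 from by ring,
      Complex.exp_zero, one_smul]
  let u : (HZ →L[ℂ] HZ)ˣ := ⟨Vg, Vginv, hVV, hVV'⟩
  have key : (↑u⁻¹ * (Do.comp De) * ↑u : HZ →L[ℂ] HZ) = Do0.comp De0 := by
    have h0 : (↑u⁻¹ * (Do.comp De) * ↑u : HZ →L[ℂ] HZ)
        = Vginv.comp (Do.comp (De.comp Vg)) := rfl
    rw [h0, hc]
  calc spectrum ℂ (Do.comp De)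
      = spectrum ℂ (↑u⁻¹ * (Do.comp De) * ↑u : HZ →L[ℂ] HZ) := (spectrum.units_conjugate').symm
    _ = spectrum ℂ (Do0.comp De0) := by rw [key]
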